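/- Let f : G → H be an injective homomorphism of finitely generated free modules over a PID R. Then f is extension preserving if and only if there exists a single basis B of G such that f(B) extends to a basis of H. -/

import Mathlib

/-- An injective map of f.g. free modules over a PID is extension preserving iff
some basis of the domain is mapped into (a subset extendable to) a basis of the codomain. -/
theorem stmt19 {R : Type} [CommRing R] [IsDomain R] [IsPrincipalIdealRing R]
    {G H : Type} [AddCommGroup G] [Module R G] [AddCommGroup H] [Module R H]
    [Module.Free R G] [Module.Finite R G] [Module.Free R H] [Module.Finite R H]
    (f : G →ₗ[R] H) (hf : Function.Injective f) :
    (∀ S : Set G, (∃ (ι : Type) (b : Module.Basis ι R G), S ⊆ Set.range b) →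
      ∃ (κ : Type) (c : Module.Basis κ R H), f '' S ⊆ Set.range c) ↔
    ∃ (ι : Type) (b : Module.Basis ι R G) (κ : Type) (c : Module.Basis κ R H),
      Set.range (⇑f ∘ ⇑b) ⊆ Set.range c := by
  classical
  constructor
  · intro h
    set b := Module.Free.chooseBasis R G with hb
    obtain ⟨κ, c, hc⟩ := h (Set.range b) ⟨_, b, subset_refl _⟩
    refine ⟨_, b, κ, c, ?_⟩
    rwa [Set.range_comp]
  · rintro ⟨ι, b, κ, c, hbc⟩
    intro S ⟨ι', b', hS⟩
    -- choose k : ι → κ with c (k i) = f (b i)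
    have hk : ∀ i : ι, ∃ j : κ, c j = f (b i) := by
      intro i
      exact hbc ⟨i, rfl⟩
    choose k hkc using hk
    have kinj : Function.Injective k := by
      intro i i' hii
      have : f (b i) = f (b i') := by rw [← hkc, ← hkc, hii]
      exact b.injective (hf this)
    set s : Set κ := Set.range k with hs
    let e0 : (ι ⊕ ↥(sᶜ)) ≃ κ :=
      (Equiv.sumCongr (Equiv.ofInjective k kinj) (Equiv.refl _)).trans (Equiv.Set.sumCompl s)
    let c₀ : Module.Basis (ι ⊕ ↥(sᶜ)) R H := c.reindex e0.symm
    have hc₀ : ∀ i : ι, c₀ (Sum.inl i) = f (b i) := by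
      intro i
      simp only [c₀, Module.Basis.reindex_apply, Equiv.symm_symm]
      have : e0 (Sum.inl i) = k i := by
        simp [e0, Equiv.Set.sumCompl_apply_inl]
      rw [this, hkc]
    let e : (G × (↥(sᶜ) →₀ R)) ≃ₗ[R] H :=
      (b.repr.prodCongr (LinearEquiv.refl R _)).trans
        ((Finsupp.sumFinsuppLEquivProdFinsupp R).symm.trans c₀.repr.symm)
    have he : ∀ g : G, e (g, 0) = f g := by
      have h2 : ∀ i : ι, e (b i, 0) = f (b i) := by
        intro i
        have : e (b i, 0) = c₀.repr.symm
            ((Finsupp.sumFinsuppLEquivProdFinsupp R).symm (Finsupp.single i 1, 0)) := by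
          simp [e]
        rw [this]
        have h3 : ((Finsupp.sumFinsuppLEquivProdFinsupp R).symm (Finsupp.single i 1, 0) :
            (ι ⊕ ↥(sᶜ)) →₀ R) = Finsupp.single (Sum.inl i) 1 := by
          apply (Finsupp.sumFinsuppLEquivProdFinsupp R).injective
          ext x
          · simp [Finsupp.sumFinsuppLEquivProdFinsupp]
          · simp [Finsupp.sumFinsuppLEquivProdFinsupp]
        rw [h3, ← hc₀ i]
        simp [Module.Basis.repr_symm_single_one]
      intro g
      let L : G →ₗ[R] H := (e : G × (↥(sᶜ) →₀ R) →ₗ[R] H) ∘ₗ LinearMap.inl R G (↥(sᶜ) →₀ R)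
      have h2' : ∀ i : ι, L (b i) = f (b i) := by
        intro i; simpa [L] using h2 i
      have := LinearMap.congr_fun (b.ext h2') g
      simpa [L] using this
    refine ⟨ι' ⊕ ↥(sᶜ),
      (b'.prod (Finsupp.basisSingleOne : Module.Basis ↥(sᶜ) R (↥(sᶜ) →₀ R))).map e, ?_⟩
    rintro x ⟨g, hgS, rfl⟩
    obtain ⟨j, rfl⟩ := hS hgS
    refine ⟨Sum.inl j, ?_⟩
    rw [Module.Basis.map_apply]
    have : (b'.prod (Finsupp.basisSingleOne : Module.Basis ↥(sᶜ) R (↥(sᶜ) →₀ R))) (Sum.inl j)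
        = (b' j, 0) := by
      ext <;> simp
    rw [this, he]
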